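/- arXiv:2308.00054 — 3 statements merged into one kernel-verified Lean document; each statement's English description precedes it below -/
import Mathlib

section
/- Let T be a finite tree with diameter d and let k > 0 be an integer. If k < d < 2k, then \u03b3^\u221e_{all,k}(T) = 2, and if d \u2264 k, then \u03b3^\u221e_{all,k}(T) = 1. -/
open SimpleGraph

universe u v

namespace EternalDom

variable {V : Type u} {W : Type v}

/-- `x` is within distance `k` of `y` in `G` (in particular, a path between them exists). -/
def WithinDist (G : SimpleGraph V) (k : ℕ) (x y : V) : Prop :=
  G.Reachable x y ∧ G.dist x y ≤ k

/-- A multiset of guards is distance-`k` dominating: every vertex is within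
distance `k` of some guard. -/
def IsDistKDomMultiset (G : SimpleGraph V) (k : ℕ) (D : Multiset V) : Prop :=
  ∀ w : V, ∃ x ∈ D, WithinDist G k x w

/-- `F` is an eternal distance-`k` defence family of guard configurations of size `m`:
a nonempty family of distance-`k` dominating multisets, all of cardinality `m`, such that
for every configuration `D ∈ F` and every attacked vertex `w` there is a configuration
`D' ∈ F` containing `w` that is obtained from `D` by a matching (bijection) moving each
guard a distance of at most `k`. -/
def IsEternalFamily (G : SimpleGraph V) (k m : ℕ) (F : Set (Multiset V)) : Prop :=
  F.Nonempty ∧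
    (∀ D ∈ F, Multiset.card D = m ∧ IsDistKDomMultiset G k D) ∧
    (∀ D ∈ F, ∀ w : V, ∃ D' ∈ F, w ∈ D' ∧ Multiset.Rel (WithinDist G k) D D')

/-- The eternal distance-`k` domination number `γ^∞_{all,k}(G)`. -/
noncomputable def eternalNum (G : SimpleGraph V) (k : ℕ) : ℕ :=
  sInf {m | ∃ F : Set (Multiset V), IsEternalFamily G k m F}

/-- `x` dominates `w`: they are equal or adjacent. -/
def Dominates (G : SimpleGraph V) (x w : V) : Prop := w = x ∨ G.Adj x w

/-- A dominating set of vertices. -/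
def IsDomSet (G : SimpleGraph V) (D : Set V) : Prop := ∀ w : V, ∃ x ∈ D, Dominates G x w

/-- The domination number `γ(G)`. -/
noncomputable def domNum (G : SimpleGraph V) : ℕ :=
  sInf {n | ∃ D : Set V, IsDomSet G D ∧ D.ncard = n}

/-- A distance-`k` dominating set of vertices. -/
def IsDistKDomSet (G : SimpleGraph V) (k : ℕ) (D : Set V) : Prop :=
  ∀ w : V, ∃ x ∈ D, WithinDist G k x w

/-- The distance-`k` domination number `γ_k(G)`. -/
noncomputable def distDomNum (G : SimpleGraph V) (k : ℕ) : ℕ :=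
  sInf {n | ∃ D : Set V, IsDistKDomSet G k D ∧ D.ncard = n}

/-- A leaf: a vertex of degree 1, i.e. with a unique neighbour. -/
def IsLeafV (G : SimpleGraph V) (x : V) : Prop := ∃! y, G.Adj x y

/-- A stem: a vertex adjacent to at least one leaf. -/
def IsStem (G : SimpleGraph V) (x : V) : Prop := ∃ y, G.Adj x y ∧ IsLeafV G y

/-- `k`-leaves: a `0`-leaf is a leaf; for `k > 0`, `v` is a `k`-leaf iff `v` is adjacent to
some `(k-1)`-leaf and all but at most one of the neighbours of `v` are `t`-leaves for some
`t < k`. -/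
def IsKLeaf (G : SimpleGraph V) : ℕ → V → Prop
  | 0, v => IsLeafV G v
  | (k + 1), v =>
      (∃ u, G.Adj v u ∧ IsKLeaf G k u) ∧
        ∃ w : V, ∀ x : V, G.Adj v x → x ≠ w → ∃ t, ∃ _ : t ≤ k, IsKLeaf G t x
  termination_by k _ => k
  decreasing_by all_goals omega

/-- For a 2-leaf `v`, the set `L(v)`: the union of `L[u]` over all neighbours `u` of `v`
which are 0-leaves or 1-leaves, where for a 1-leaf `u`, `L[u]` consists of `u` and the leaves
adjacent to `u`. -/
def Lopen (G : SimpleGraph V) (v : V) : Set V :=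
  {x | ∃ u, G.Adj v u ∧
    ((IsKLeaf G 0 u ∧ x = u) ∨
      (IsKLeaf G 1 u ∧ (x = u ∨ (G.Adj u x ∧ IsKLeaf G 0 x))))}

/-- For a 2-leaf `v`, the set `L[v] = L(v) ∪ {v}`. -/
def Lclosed (G : SimpleGraph V) (v : V) : Set V := insert v (Lopen G v)

/-- A graph is eternal distance-2 domination critical if deleting any non-cut vertex
(one whose removal leaves the graph connected) strictly decreases the eternal
distance-2 domination number. -/
def EternalCritical (G : SimpleGraph V) : Prop :=
  ∀ x : V, (G.induce {y | y ≠ x}).Connected →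
    eternalNum (G.induce {y | y ≠ x}) 2 < eternalNum G 2

/-- Attach a pendant path `x₁ x₂ … xₙ` on `n` new vertices to the vertex `y`,
via the edge `y x₁`. -/
def attachPath (G : SimpleGraph V) (y : V) (n : ℕ) : SimpleGraph (V ⊕ Fin n) :=
  G.map Sum.inl ⊔ (pathGraph n).map Sum.inr ⊔
    fromEdgeSet {e | ∃ h : 0 < n, e = s(Sum.inl y, Sum.inr ⟨0, h⟩)}

/-- The star `K_{1,m}`: centre `0`, leaves the `m` nonzero elements of `Fin (m+1)`. -/
def starGraph (m : ℕ) : SimpleGraph (Fin (m + 1)) where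
  Adj x y := (x = 0 ∧ y ≠ 0) ∨ (y = 0 ∧ x ≠ 0)
  symm := by tauto
  loopless := ⟨by rintro x (⟨h1, h2⟩ | ⟨h1, h2⟩) <;> exact h2 h1⟩

/-- Disjoint union of `G` and the star `K_{1,m}` together with one edge joining the
vertex `a` of the star to the vertex `y` of `G`. -/
def attachStar (G : SimpleGraph V) (y : V) (m : ℕ) (a : Fin (m + 1)) :
    SimpleGraph (V ⊕ Fin (m + 1)) :=
  G.map Sum.inl ⊔ (starGraph m).map Sum.inr ⊔
    fromEdgeSet {s(Sum.inl y, Sum.inr a)}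

/-- From `G` and a vertex `v`: add a new star `K_{1,m}` joined by an edge from its centre
to `v`, together with `t` new leaves adjacent to `v`. -/
def addStarAndLeaves (G : SimpleGraph V) (v : V) (m t : ℕ) :
    SimpleGraph (V ⊕ (Fin (m + 1) ⊕ Fin t)) :=
  G.map Sum.inl ⊔
    (starGraph m).map (Sum.inr ∘ Sum.inl) ⊔
    fromEdgeSet ({s(Sum.inl v, Sum.inr (Sum.inl 0))} ∪
      {e | ∃ i : Fin t, e = s(Sum.inl v, Sum.inr (Sum.inr i))})

/-- From `G` and a vertex `v`: add two new stars `K_{1,m}` and `K_{1,M}`, joining the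
centre of each new star to `v` by an edge. -/
def addTwoStars (G : SimpleGraph V) (v : V) (m M : ℕ) :
    SimpleGraph (V ⊕ (Fin (m + 1) ⊕ Fin (M + 1))) :=
  G.map Sum.inl ⊔
    (starGraph m).map (Sum.inr ∘ Sum.inl) ⊔
    (starGraph M).map (Sum.inr ∘ Sum.inr) ⊔
    fromEdgeSet {s(Sum.inl v, Sum.inr (Sum.inl 0)), s(Sum.inl v, Sum.inr (Sum.inr 0))}

/-- The 1-sum of `G` and `H` at the vertex `u` of `G` and the vertex `w` of `H`:
the disjoint union of `G` and `H` with `u` and `w` identified. -/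
def oneSum (G : SimpleGraph V) (H : SimpleGraph W) (u : V) (w : W) :
    SimpleGraph (V ⊕ {x : W // x ≠ w}) where
  Adj x y :=
    match x, y with
    | Sum.inl a, Sum.inl b => G.Adj a b
    | Sum.inr a, Sum.inr b => H.Adj a.1 b.1
    | Sum.inl a, Sum.inr b => a = u ∧ H.Adj w b.1
    | Sum.inr a, Sum.inl b => b = u ∧ H.Adj w a.1
  symm := ⟨by
    rintro (a | a) (b | b) h
    · exact h.symm
    · exact h
    · exact h
    · exact h.symm⟩
  loopless := ⟨by
    rintro (a | a) h
    · exact G.loopless.irrefl a h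
    · exact H.loopless.irrefl a.1 h⟩



section TreeAux

open SimpleGraph Walk

variable {G : SimpleGraph V}

/-- In a tree, any path realizes the distance between its endpoints. -/
lemma tree_path_length_eq_dist (hG : G.IsTree) {u v : V} {p : G.Walk u v} (hp : p.IsPath) :
    p.length = G.dist u v := by
  obtain ⟨q, hq, hql⟩ := (hG.isConnected u v).exists_path_of_dist
  have h : (⟨p, hp⟩ : G.Path u v) = ⟨q, hq⟩ := hG.2.path_unique _ _
  rw [← hql]
  exact congrArg (fun r : G.Path u v => r.1.length) h

/-- Split a walk at the first vertex lying in `S` (assuming the endpoint lies in `S`). -/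
lemma exists_first_split (S : Set V) {w c : V} (q : G.Walk w c) (hc : c ∈ S) :
    ∃ (z : V) (q₁ : G.Walk w z) (q₂ : G.Walk z c), q = q₁.append q₂ ∧ z ∈ S ∧
      ∀ x ∈ q₁.support, x ∈ S → x = z := by
  induction q with
  | nil => exact ⟨_, Walk.nil, Walk.nil, rfl, hc, by simp⟩
  | @cons a b c' h q ih =>
    by_cases ha : a ∈ S
    · exact ⟨a, Walk.nil, Walk.cons h q, rfl, ha, by simp⟩
    · obtain ⟨z, q₁, q₂, hq, hz, hfst⟩ := ih hc
      refine ⟨z, Walk.cons h q₁, q₂, by rw [Walk.cons_append, hq], hz, ?_⟩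
      intro x hx hxS
      rw [Walk.support_cons, List.mem_cons] at hx
      rcases hx with rfl | hx
      · exact absurd hxS ha
      · exact hfst x hx hxS

/-- Between two vertices on a path there is a path staying inside its support. -/
lemma exists_path_between_of_mem_support {u v : V} {p : G.Walk u v} (hp : p.IsPath)
    {z₁ z₂ : V} (h₁ : z₁ ∈ p.support) (h₂ : z₂ ∈ p.support) :
    ∃ r : G.Walk z₁ z₂, r.IsPath ∧ r.support ⊆ p.support := by
  classical
  rw [← Walk.take_spec p h₁, Walk.mem_support_append_iff] at h₂
  rcases h₂ with h₂ | h₂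
  · refine ⟨((p.takeUntil z₁ h₁).dropUntil z₂ h₂).reverse, ((hp.takeUntil h₁).dropUntil h₂).reverse,
      fun x hx => ?_⟩
    rw [Walk.support_reverse, List.mem_reverse] at hx
    exact Walk.support_takeUntil_subset p h₁ (Walk.support_dropUntil_subset _ h₂ hx)
  · exact ⟨(p.dropUntil z₁ h₁).takeUntil z₂ h₂, (hp.dropUntil h₁).takeUntil h₂,
      fun x hx => Walk.support_dropUntil_subset p h₁ (Walk.support_takeUntil_subset _ h₂ hx)⟩

lemma dist_add_dist_eq_length (hG : G.IsTree) {u v : V} {p : G.Walk u v} (hp : p.IsPath)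
    {z : V} (hz : z ∈ p.support) : G.dist u z + G.dist z v = p.length := by
  classical
  have h := congrArg Walk.length (Walk.take_spec p hz)
  rw [Walk.length_append] at h
  rw [← tree_path_length_eq_dist hG (hp.takeUntil hz),
    ← tree_path_length_eq_dist hG (hp.dropUntil hz), h]

/-- Two vertices on a path in a tree are ordered along the path. -/
lemma dist_ordered_on_path (hG : G.IsTree) {u v : V} {p : G.Walk u v} (hp : p.IsPath)
    {z₁ z₂ : V} (h₁ : z₁ ∈ p.support) (h₂ : z₂ ∈ p.support) :
    G.dist u z₂ = G.dist u z₁ + G.dist z₁ z₂ ∨ G.dist u z₁ = G.dist u z₂ + G.dist z₂ z₁ := by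
  classical
  have hsp := h₂
  rw [← Walk.take_spec p h₁, Walk.mem_support_append_iff] at hsp
  rcases hsp with hsp | hsp
  · right
    have h := congrArg Walk.length (Walk.take_spec (p.takeUntil z₁ h₁) hsp)
    rw [Walk.length_append] at h
    rw [← tree_path_length_eq_dist hG (hp.takeUntil h₁),
      ← tree_path_length_eq_dist hG ((hp.takeUntil h₁).takeUntil hsp),
      ← tree_path_length_eq_dist hG ((hp.takeUntil h₁).dropUntil hsp), h]
  · left
    set d' := p.dropUntil z₁ h₁ with hd'
    have hWpath : ((p.takeUntil z₁ h₁).append (d'.takeUntil z₂ hsp)).IsPath := by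
      apply Walk.IsPath.of_append_left (q := d'.dropUntil z₂ hsp)
      rw [← Walk.append_assoc, Walk.take_spec d' hsp, hd', Walk.take_spec p h₁]
      exact hp
    have h := tree_path_length_eq_dist hG hWpath
    rw [Walk.length_append] at h
    rw [← h, ← tree_path_length_eq_dist hG (hp.takeUntil h₁),
      ← tree_path_length_eq_dist hG ((hp.dropUntil h₁).takeUntil hsp)]

/-- A path has vertices at every distance up to its length from its start. -/
lemma exists_prefix_path {u v : V} (p : G.Walk u v) (hp : p.IsPath) :
    ∀ i ≤ p.length, ∃ (c : V) (q : G.Walk u c), q.IsPath ∧ q.length = i ∧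
      q.support ⊆ p.support := by
  induction p with
  | nil =>
    intro i hi
    obtain rfl : i = 0 := by simpa using hi
    exact ⟨_, Walk.nil, Walk.IsPath.nil, rfl, fun x hx => hx⟩
  | @cons a b c' h q ih =>
    intro i hi
    cases i with
    | zero =>
      refine ⟨a, Walk.nil, Walk.IsPath.nil, rfl, fun x hx => ?_⟩
      simp only [Walk.support_nil, List.mem_singleton] at hx
      subst hx
      exact Walk.start_mem_support _
    | succ i =>
      obtain ⟨c, q', hq', hlen, hsub⟩ := ih hp.of_cons i (by
        simpa [Walk.length_cons] using hi)
      have hna : a ∉ q'.support := fun hmem =>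
        ((Walk.cons_isPath_iff h q).mp hp).2 (hsub hmem)
      refine ⟨c, Walk.cons h q', hq'.cons hna, by simp [hlen], fun x hx => ?_⟩
      rw [Walk.support_cons, List.mem_cons] at hx
      rcases hx with rfl | hx
      · exact Walk.start_mem_support _
      · rw [Walk.support_cons]
        exact List.mem_cons_of_mem _ (hsub hx)

/-- The key geometric fact: a tree whose diameter is at most `2 * k` has a vertex
within distance `k` of every vertex. -/
lemma exists_center (hG : G.IsTree) {u v : V} (p : G.Walk u v) (hp : p.IsPath)
    (hall : ∀ x y : V, G.dist x y ≤ p.length) {k : ℕ} (hd2 : p.length ≤ 2 * k) :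
    ∃ c : V, ∀ w : V, G.dist c w ≤ k := by
  obtain ⟨c, qc, hqc, hqlen, hqsub⟩ := exists_prefix_path p hp (p.length - k) (by omega)
  have hc : c ∈ p.support := hqsub qc.end_mem_support
  have hduc : G.dist u c = p.length - k := by
    rw [← tree_path_length_eq_dist hG hqc, hqlen]
  refine ⟨c, fun w => ?_⟩
  obtain ⟨q, hq, -⟩ := (hG.isConnected w c).exists_path_of_dist
  obtain ⟨z, q₁, q₂, rfl, hzS, hfirst⟩ :=
    exists_first_split {x | x ∈ p.support} q hc
  have hq₁ : q₁.IsPath := hq.of_append_left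
  have key : ∀ y, y ∈ p.support → G.dist y w = G.dist y z + G.dist z w := by
    intro y hy
    obtain ⟨r, hr, hrsub⟩ := exists_path_between_of_mem_support hp hy hzS
    have hWpath : (r.append q₁.reverse).IsPath := by
      rw [Walk.isPath_def, Walk.support_append]
      refine List.Nodup.append hr.support_nodup (hq₁.reverse.support_nodup.tail) ?_
      intro x hxr hxt
      have hxq₁ : x ∈ q₁.support := by
        have := List.mem_of_mem_tail hxt
        rwa [Walk.support_reverse, List.mem_reverse] at this
      have hxz : x = z := hfirst x hxq₁ (hrsub hxr)
      have hzn : z ∉ q₁.reverse.support.tail := by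
        have hnd := hq₁.reverse.support_nodup
        rw [Walk.support_eq_cons q₁.reverse] at hnd
        exact (List.nodup_cons.mp hnd).1
      exact hzn (hxz ▸ hxt)
    have h1 := tree_path_length_eq_dist hG hWpath
    rw [Walk.length_append, Walk.length_reverse] at h1
    rw [← h1, ← tree_path_length_eq_dist hG hr, dist_comm (u := z) (v := w),
      ← tree_path_length_eq_dist hG hq₁]
  have e1 := key u p.start_mem_support
  have e2 := key v p.end_mem_support
  have e4 := key c hc
  have e3 := dist_add_dist_eq_length hG hp hzS
  have b1 := hall u w
  have b2 := hall v w
  have hord := dist_ordered_on_path hG hp hc hzS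
  rw [dist_comm (u := z) (v := v)] at e3
  rw [dist_comm (u := z) (v := c)] at hord
  omega

lemma not_eternal_zero [Nonempty V] {k : ℕ} {F : Set (Multiset V)} :
    ¬ IsEternalFamily G k 0 F := by
  rintro ⟨⟨D, hD⟩, hprop, -⟩
  obtain ⟨hcard, hdom⟩ := hprop D hD
  obtain ⟨x, hx, -⟩ := hdom (Classical.arbitrary V)
  rw [Multiset.card_eq_zero] at hcard
  subst hcard
  exact Multiset.notMem_zero x hx

end TreeAux

/-- eternal distance-`k` domination numbers of trees of small diameter. -/
theorem small_diameter_values {V : Type u} [Fintype V] (G : SimpleGraph V) (hG : G.IsTree)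
    (k : ℕ) (hk : 0 < k) :
    (((k : ℕ∞) < G.ediam ∧ G.ediam < ((2 * k : ℕ) : ℕ∞)) → eternalNum G k = 2) ∧
    (G.ediam ≤ (k : ℕ∞) → eternalNum G k = 1) := by
  have hconn := hG.isConnected
  have hne : Nonempty V := hconn.nonempty
  constructor
  · rintro ⟨h1, h2⟩
    obtain ⟨u, v, huv⟩ := G.exists_edist_eq_ediam_of_finite
    have htop : G.ediam ≠ ⊤ := ne_top_of_lt h2
    have hcast : (G.dist u v : ℕ∞) = G.edist u v := by
      rw [SimpleGraph.dist, ENat.coe_toNat (huv ▸ htop)]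
    have hd1 : k < G.dist u v := by
      have : (k : ℕ∞) < (G.dist u v : ℕ∞) := by rw [hcast, huv]; exact h1
      exact_mod_cast this
    have hd2 : G.dist u v < 2 * k := by
      have : (G.dist u v : ℕ∞) < ((2 * k : ℕ) : ℕ∞) := by rw [hcast, huv]; exact h2
      exact_mod_cast this
    have hall : ∀ x y : V, G.dist x y ≤ G.dist u v := by
      intro x y
      have hle : G.edist x y ≤ G.edist u v := huv ▸ G.edist_le_ediam
      have := ENat.toNat_le_toNat hle (huv ▸ htop)
      simpa [SimpleGraph.dist] using this
    obtain ⟨p, hp, hplen⟩ := hconn.exists_path_of_dist u v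
    obtain ⟨c, hcent⟩ := exists_center hG p hp (fun x y => hplen ▸ hall x y)
      (by omega : p.length ≤ 2 * k)
    have hfam : IsEternalFamily G k 2 {D : Multiset V | ∃ w : V, D = {c, w}} := by
      refine ⟨⟨{c, c}, c, rfl⟩, ?_, ?_⟩
      · rintro D ⟨w, rfl⟩
        refine ⟨rfl, fun y => ⟨c, Multiset.mem_cons_self c _, hconn c y, hcent y⟩⟩
      · rintro D ⟨w, rfl⟩ w'
        refine ⟨{c, w'}, ⟨w', rfl⟩, Multiset.mem_cons_of_mem (Multiset.mem_singleton_self w'),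
          ?_⟩
        have hsw : ({c, w'} : Multiset V) = w' ::ₘ {c} := Multiset.cons_swap c w' 0
        rw [hsw]
        exact Multiset.Rel.cons ⟨hconn c w', hcent w'⟩
          (Multiset.Rel.cons ⟨hconn w c, by rw [dist_comm]; exact hcent w⟩ Multiset.Rel.zero)
    apply le_antisymm
    · exact Nat.sInf_le ⟨_, hfam⟩
    · refine le_csInf ⟨2, _, hfam⟩ ?_
      rintro m ⟨F, hF⟩
      by_contra hlt
      interval_cases m
      · exact not_eternal_zero hF
      · obtain ⟨⟨D, hD⟩, hprop, hmove⟩ := hF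
        obtain ⟨D', hD', huD', hrel⟩ := hmove D hD u
        obtain ⟨hcard, hdom⟩ := hprop D' hD'
        obtain ⟨a, rfl⟩ := Multiset.card_eq_one.mp hcard
        rw [Multiset.mem_singleton] at huD'
        subst huD'
        obtain ⟨x, hx, -, hxd⟩ := hdom v
        rw [Multiset.mem_singleton] at hx
        subst hx
        omega
  · intro hdle
    have hbound : ∀ x y : V, G.dist x y ≤ k := by
      intro x y
      have hle : G.edist x y ≤ (k : ℕ∞) := le_trans G.edist_le_ediam hdle
      have := ENat.toNat_le_toNat hle (by simp)
      simpa [SimpleGraph.dist] using this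
    have hfam : IsEternalFamily G k 1 (Set.range fun v : V => ({v} : Multiset V)) := by
      refine ⟨⟨{Classical.arbitrary V}, _, rfl⟩, ?_, ?_⟩
      · rintro D ⟨a, rfl⟩
        refine ⟨rfl, fun y => ⟨a, Multiset.mem_singleton_self a, hconn a y, hbound a y⟩⟩
      · rintro D ⟨a, rfl⟩ w
        refine ⟨{w}, ⟨w, rfl⟩, Multiset.mem_singleton_self w, ?_⟩
        show Multiset.Rel (WithinDist G k) {a} {w}
        rw [← Multiset.cons_zero a, ← Multiset.cons_zero w]
        exact Multiset.Rel.cons ⟨hconn a w, hbound a w⟩ Multiset.Rel.zero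
    apply le_antisymm
    · exact Nat.sInf_le ⟨_, hfam⟩
    · refine le_csInf ⟨1, _, hfam⟩ ?_
      rintro m ⟨F, hF⟩
      by_contra hlt
      interval_cases m
      exact not_eternal_zero hF

end EternalDom
end

section
/- Let k be a positive integer, let T' be a finite tree, and let T be the tree obtained from T' by attaching to each vertex v of T' a new pendant path P_v = v_1 v_2 ... v_k on k vertices via the edge (v, v_1). Then T has n = (k+1)|V(T')| vertices and \u03b3^\u221e_{all,k}(T) = |V(T')| = n/(k+1); in particular T attains the general upper bound \u2308 n/(k+1) \u2309 on the eternal distance-k domination number of connected graphs. -/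
open SimpleGraph

universe u v

namespace EternalDom

variable {V : Type u} {W : Type v}

/-- The tree obtained from `G` by attaching to each vertex `v` a new pendant path
`v₁ v₂ … v_k` on `k` vertices, via the edge `(v, v₁)`. -/
def attachPaths (G : SimpleGraph V) (k : ℕ) : SimpleGraph (V ⊕ V × Fin k) :=
  G.map Sum.inl ⊔
    fromEdgeSet
      ({e | ∃ (v : V) (h : 0 < k), e = s(Sum.inl v, Sum.inr (v, ⟨0, h⟩))} ∪
        {e | ∃ (v : V) (i : ℕ) (h : i + 1 < k),
            e = s(Sum.inr (v, ⟨i, Nat.lt_of_succ_lt h⟩), Sum.inr (v, ⟨i + 1, h⟩))})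

section Aux

variable {V : Type u}

/-- `pt k hk v i` is the `i`-th vertex of the branch over `v` in `attachPaths G k`:
position `0` is `v` itself, position `i+1` is the `i`-th vertex of the pendant path. -/
def pt (k : ℕ) (hk : 0 < k) (v : V) : ℕ → V ⊕ V × Fin k
  | 0 => Sum.inl v
  | (j + 1) => Sum.inr (v, ⟨j % k, Nat.mod_lt _ hk⟩)

lemma adj_pt (G : SimpleGraph V) {k : ℕ} (hk : 0 < k) (v : V) {i : ℕ} (h : i + 1 ≤ k) :
    (attachPaths G k).Adj (pt k hk v i) (pt k hk v (i + 1)) := by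
  cases i with
  | zero =>
    refine Or.inr ⟨Or.inl ⟨v, hk, ?_⟩, by simp [pt]⟩
    simp [pt, Nat.mod_eq_of_lt hk]
  | succ j =>
    have hj : j < k := by omega
    have hj1 : j + 1 < k := by omega
    refine Or.inr ⟨Or.inr ⟨v, j, hj1, ?_⟩, ?_⟩
    · simp [pt, Nat.mod_eq_of_lt hj, Nat.mod_eq_of_lt hj1]
    · simp only [pt, ne_eq, Sum.inr.injEq, Prod.mk.injEq, Fin.mk.injEq,
        Nat.mod_eq_of_lt hj, Nat.mod_eq_of_lt hj1, true_and]
      omega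

lemma walk_pt (G : SimpleGraph V) {k : ℕ} (hk : 0 < k) (v : V) :
    ∀ (d i : ℕ), i + d ≤ k →
      ∃ p : (attachPaths G k).Walk (pt k hk v i) (pt k hk v (i + d)), p.length = d := by
  intro d
  induction d with
  | zero => exact fun i _ => ⟨SimpleGraph.Walk.nil, rfl⟩
  | succ d ih =>
    intro i h
    obtain ⟨p, hp⟩ := ih i (by omega)
    refine ⟨(p.concat (adj_pt G hk v (by omega))).copy rfl (by ring_nf), ?_⟩
    simp [SimpleGraph.Walk.length_concat, hp]

lemma withinDist_pt (G : SimpleGraph V) {k : ℕ} (hk : 0 < k) (v : V) {i j : ℕ}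
    (hi : i ≤ k) (hj : j ≤ k) :
    WithinDist (attachPaths G k) k (pt k hk v i) (pt k hk v j) := by
  rcases le_total i j with h | h
  · obtain ⟨p, hp⟩ := walk_pt G hk v (j - i) i (by omega)
    have hij : i + (j - i) = j := by omega
    let q := p.copy rfl (by rw [hij])
    have hq : q.length = j - i := by simpa [q] using hp
    exact ⟨q.reachable, le_trans (SimpleGraph.dist_le q) (by omega)⟩
  · obtain ⟨p, hp⟩ := walk_pt G hk v (i - j) j (by omega)
    have hij : j + (i - j) = i := by omega
    let q := (p.copy rfl (by rw [hij])).reverse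
    have hq : q.length = i - j := by simpa [q] using hp
    exact ⟨q.reverse.reachable.symm, le_trans (SimpleGraph.dist_le q) (by omega)⟩

lemma exists_pt {k : ℕ} (hk : 0 < k) (x : V ⊕ V × Fin k) :
    ∃ v i, i ≤ k ∧ x = pt k hk v i := by
  rcases x with v | ⟨v, j, hj⟩
  · exact ⟨v, 0, Nat.zero_le _, rfl⟩
  · exact ⟨v, j + 1, by omega, by simp [pt, Nat.mod_eq_of_lt hj]⟩

/-- The branch a vertex of `attachPaths G k` belongs to. -/
def branchOf {k : ℕ} : V ⊕ V × Fin k → V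
  | Sum.inl v => v
  | Sum.inr p => p.1

/-- Lower-bound potential: `rho k v x` is a lower bound for the distance from `x`
to the endpoint of the branch over `v`. -/
def rho [DecidableEq V] (k : ℕ) (v : V) : V ⊕ V × Fin k → ℕ
  | Sum.inl u => if u = v then k else k + 1
  | Sum.inr p => if p.1 = v then k - 1 - (p.2 : ℕ) else k + 2

lemma rho_adj [DecidableEq V] (G : SimpleGraph V) {k : ℕ} (v : V)
    {a b : V ⊕ V × Fin k} (h : (attachPaths G k).Adj a b) :
    rho k v a ≤ rho k v b + 1 := by
  rcases h with ⟨-, u, u', _, ha, hb⟩ | ⟨h1 | h2, hne⟩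
  · subst ha; subst hb
    simp only [rho]; split_ifs <;> omega
  · obtain ⟨w, hw, he⟩ := h1
    rw [Sym2.eq_iff] at he
    rcases he with ⟨ha, hb⟩ | ⟨ha, hb⟩ <;> subst ha <;> subst hb <;>
      simp only [rho] <;> split_ifs <;> omega
  · obtain ⟨w, i, hi, he⟩ := h2
    rw [Sym2.eq_iff] at he
    rcases he with ⟨ha, hb⟩ | ⟨ha, hb⟩ <;> subst ha <;> subst hb <;>
      simp only [rho] <;> split_ifs <;> omega

lemma rho_walk [DecidableEq V] (G : SimpleGraph V) {k : ℕ} (v : V)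
    {a b : V ⊕ V × Fin k} (p : (attachPaths G k).Walk a b) :
    rho k v a ≤ rho k v b + p.length := by
  induction p with
  | nil => simp
  | cons h p ih =>
    have := rho_adj G v h
    simp only [SimpleGraph.Walk.length_cons]
    omega

lemma branch_eq_of_withinDist [DecidableEq V] (G : SimpleGraph V) {k : ℕ} (hk : 0 < k)
    (v : V) {x : V ⊕ V × Fin k}
    (hx : WithinDist (attachPaths G k) k x (Sum.inr (v, ⟨k - 1, by omega⟩))) :
    branchOf x = v := by
  obtain ⟨hr, hd⟩ := hx
  obtain ⟨p, hp⟩ := hr.exists_walk_length_eq_dist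
  have hb : rho k v (Sum.inr (v, ⟨k - 1, by omega⟩) : V ⊕ V × Fin k) = 0 := by
    simp [rho]
  have := rho_walk G v p
  rw [hp, hb] at this
  rcases x with u | ⟨u, i⟩
  · by_contra hne
    simp only [branchOf] at hne
    simp only [rho, if_neg hne] at this
    omega
  · by_contra hne
    simp only [branchOf] at hne
    simp only [rho, if_neg hne] at this
    omega

end Aux

/-- attaching a pendant path on `k` vertices to every vertex of a tree `T'`
produces a tree on `(k+1)|V(T')|` vertices whose eternal distance-`k` domination number is
exactly `|V(T')| = n/(k+1)`; in particular it attains the general upper bound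
`⌈n/(k+1)⌉`. -/
theorem attachPaths_eternalNum {V : Type u} [Fintype V] (k : ℕ) (hk : 0 < k)
    (G : SimpleGraph V) (hG : G.IsTree) :
    Fintype.card (V ⊕ V × Fin k) = (k + 1) * Fintype.card V ∧
    eternalNum (attachPaths G k) k = Fintype.card V ∧
    eternalNum (attachPaths G k) k = ⌈(Fintype.card (V ⊕ V × Fin k) : ℝ) / (k + 1)⌉₊ := by
  classical
  have hcard : Fintype.card (V ⊕ V × Fin k) = (k + 1) * Fintype.card V := by
    simp only [Fintype.card_sum, Fintype.card_prod, Fintype.card_fin]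
    ring
  have key : eternalNum (attachPaths G k) k = Fintype.card V := by
    set A := attachPaths G k with hA
    set F : Set (Multiset (V ⊕ V × Fin k)) :=
      {D | ∃ f : V → Fin (k + 1),
        D = Multiset.map (fun v => pt k hk v (f v)) Finset.univ.val} with hFdef
    have hfam : IsEternalFamily A k (Fintype.card V) F := by
      refine ⟨⟨_, ⟨fun _ => 0, rfl⟩⟩, ?_, ?_⟩
      · rintro D ⟨f, rfl⟩
        constructor
        · simp
        · intro w
          obtain ⟨v, i, hi, rfl⟩ := exists_pt hk w
          exact ⟨pt k hk v (f v),
            Multiset.mem_map_of_mem _ (by simp),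
            withinDist_pt G hk v (Fin.is_le _) hi⟩
      · rintro D ⟨f, rfl⟩ w
        obtain ⟨v, i, hi, rfl⟩ := exists_pt hk w
        refine ⟨Multiset.map
            (fun u => pt k hk u (Function.update f v ⟨i, by omega⟩ u)) Finset.univ.val,
          ⟨_, rfl⟩, ?_, ?_⟩
        · have h1 : pt k hk v ((Function.update f v ⟨i, by omega⟩ v : Fin (k + 1)) : ℕ)
              = pt k hk v i := by rw [Function.update_self]
          exact h1 ▸ Multiset.mem_map_of_mem _ (by simp)
        · rw [Multiset.rel_map]
          exact Multiset.rel_refl_of_refl_on fun u _ =>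
            withinDist_pt G hk u (Fin.is_le _) (Fin.is_le _)
    have hub : eternalNum A k ≤ Fintype.card V := Nat.sInf_le ⟨F, hfam⟩
    have hlb : Fintype.card V ≤ eternalNum A k := by
      refine le_csInf ⟨Fintype.card V, F, hfam⟩ ?_
      rintro m ⟨F', hne, hprop, _⟩
      obtain ⟨D, hD⟩ := hne
      obtain ⟨hcardD, hdom⟩ := hprop D hD
      choose g hg1 hg2 using fun v => hdom (Sum.inr (v, ⟨k - 1, by omega⟩))
      have hbr : ∀ v, branchOf (g v) = v := fun v =>
        branch_eq_of_withinDist G hk v (hg2 v)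
      have hinj : Function.Injective g := Function.LeftInverse.injective hbr
      calc Fintype.card V = (Finset.univ.image g).card := by
            rw [Finset.card_image_of_injective _ hinj, Finset.card_univ]
        _ ≤ D.toFinset.card := by
            refine Finset.card_le_card ?_
            intro x hx
            simp only [Finset.mem_image, Finset.mem_univ, true_and] at hx
            obtain ⟨v, rfl⟩ := hx
            exact Multiset.mem_toFinset.mpr (hg1 v)
        _ ≤ Multiset.card D := Multiset.toFinset_card_le D
        _ = m := hcardD
    omega
  refine ⟨hcard, key, ?_⟩
  rw [key, hcard]
  push_cast
  rw [mul_div_cancel_left₀ _ (by positivity : ((k : ℝ) + 1) ≠ 0)]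
  exact (Nat.ceil_natCast _).symm

end EternalDom
end

section
/- Let T be a finite tree and let v be a vertex of T adjacent to two distinct leaves x and y. Then \u03b3_2(T - x) = \u03b3_2(T). -/
open SimpleGraph

universe u v

namespace EternalDom

variable {V : Type u} {W : Type v}

section Helpers

variable {G : SimpleGraph V}

lemma leaf_adj_eq {v x u : V} (hx : G.Adj v x) (hxl : IsLeafV G x) (hu : G.Adj x u) : u = v := by
  obtain ⟨y0, _, huniq⟩ := hxl
  exact (huniq u hu).trans (huniq v hx.symm).symm

lemma leaf_dist {v x w : V} (hx : G.Adj v x) (hxl : IsLeafV G x) (hw : w ≠ x)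
    (hr : G.Reachable x w) : G.dist v w + 1 ≤ G.dist x w := by
  obtain ⟨p, hp⟩ := hr.exists_walk_length_eq_dist
  cases p with
  | nil => exact absurd rfl hw.symm
  | @cons _ c _ h q =>
    have hcv := leaf_adj_eq hx hxl h
    have h1 : G.dist v w ≤ q.length := by rw [← hcv]; exact SimpleGraph.dist_le q
    simp [Walk.length_cons] at hp
    omega

lemma leaf_not_mem_path [DecidableEq V] {v x a b : V} (hx : G.Adj v x) (hxl : IsLeafV G x)
    (ha : a ≠ x) (hb : b ≠ x) (p : G.Walk a b) (hp : p.IsPath) : x ∉ p.support := by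
  intro hmem
  have hspec := p.take_spec hmem
  have hnodup : p.support.Nodup := hp.support_nodup
  rw [← hspec, Walk.support_append] at hnodup
  have hdisj := (List.nodup_append.mp hnodup).2.2
  -- v ∈ (p.takeUntil x hmem).support
  have hq : ¬ (p.takeUntil x hmem).Nil := Walk.not_nil_of_ne ha
  have hqr : ¬ (p.takeUntil x hmem).reverse.Nil := Walk.not_nil_of_ne ha.symm
  obtain ⟨u, h, q', hq'⟩ := Walk.not_nil_iff.mp hqr
  have hu : u = v := leaf_adj_eq hx hxl h
  have hv1 : v ∈ (p.takeUntil x hmem).support := by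
    have : u ∈ (p.takeUntil x hmem).reverse.support := by
      rw [hq']; simp [q'.start_mem_support]
    rw [Walk.support_reverse, List.mem_reverse] at this
    rwa [hu] at this
  -- v ∈ (p.dropUntil x hmem).support.tail
  have hr : ¬ (p.dropUntil x hmem).Nil := Walk.not_nil_of_ne hb.symm
  obtain ⟨w, h', r', hr'⟩ := Walk.not_nil_iff.mp hr
  have hw : w = v := leaf_adj_eq hx hxl h'
  have hv2 : v ∈ (p.dropUntil x hmem).support.tail := by
    rw [hr']; simp only [Walk.support_cons, List.tail_cons]
    rw [← hw]; exact r'.start_mem_support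
  exact hdisj v hv1 v hv2 rfl

lemma walk_transfer {s : Set V} : ∀ {a b : V} (p : G.Walk a b)
    (hp : ∀ z ∈ p.support, z ∈ s),
    ∃ q : (G.induce s).Walk ⟨a, hp a p.start_mem_support⟩ ⟨b, hp b p.end_mem_support⟩,
      q.length = p.length := by
  intro a b p
  induction p with
  | nil => exact fun hp => ⟨.nil, rfl⟩
  | @cons a c b h p ih =>
    intro hp
    obtain ⟨q, hq⟩ := ih (fun z hz => hp z (by simp [hz]))
    exact ⟨.cons (by simpa using h) q, by simp [hq]⟩

def inclHom (G : SimpleGraph V) (s : Set V) : G.induce s →g G where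
  toFun := Subtype.val
  map_rel' := fun h => by simpa using h

lemma dist_le_induce {s : Set V} {a b : V} (ha : a ∈ s) (hb : b ∈ s)
    (hr : (G.induce s).Reachable ⟨a, ha⟩ ⟨b, hb⟩) :
    G.Reachable a b ∧ G.dist a b ≤ (G.induce s).dist ⟨a, ha⟩ ⟨b, hb⟩ := by
  obtain ⟨q, hq⟩ := hr.exists_walk_length_eq_dist
  have := q.map (inclHom G s)
  refine ⟨⟨this⟩, ?_⟩
  calc G.dist a b ≤ (q.map (inclHom G s)).length := SimpleGraph.dist_le _
    _ = q.length := q.length_map _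
    _ = _ := hq

lemma induce_dist_le [DecidableEq V] {v x a b : V} (hx : G.Adj v x) (hxl : IsLeafV G x)
    (ha : a ≠ x) (hb : b ≠ x) (hr : G.Reachable a b) :
    (G.induce {z | z ≠ x}).Reachable ⟨a, ha⟩ ⟨b, hb⟩ ∧
      (G.induce {z | z ≠ x}).dist ⟨a, ha⟩ ⟨b, hb⟩ ≤ G.dist a b := by
  obtain ⟨w, hw⟩ := hr.exists_walk_length_eq_dist
  have hbyp := w.bypass_isPath
  have hnot : x ∉ w.bypass.support := leaf_not_mem_path hx hxl ha hb _ hbyp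
  have hsub : ∀ z ∈ w.bypass.support, z ∈ {z | z ≠ x} := by
    intro z hz h; exact hnot (h ▸ hz)
  obtain ⟨q, hq⟩ := walk_transfer w.bypass hsub
  refine ⟨⟨q⟩, ?_⟩
  calc (G.induce {z | z ≠ x}).dist ⟨a, ha⟩ ⟨b, hb⟩ ≤ q.length := SimpleGraph.dist_le _
    _ = w.bypass.length := hq
    _ ≤ w.length := w.length_bypass_le
    _ = G.dist a b := hw


end Helpers

/-- deleting one of two leaves sharing a common neighbour does not change
the distance-2 domination number of a tree. -/
theorem distDomNum_delete_twin_leaf {V : Type u} [Fintype V] (G : SimpleGraph V)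
    (hG : G.IsTree) (v x y : V) (hxy : x ≠ y) (hx : G.Adj v x) (hxl : IsLeafV G x)
    (hy : G.Adj v y) (hyl : IsLeafV G y) :
    distDomNum (G.induce {z | z ≠ x}) 2 = distDomNum G 2 := by
  classical
  have hconn : G.Connected := hG.isConnected
  have hreach : ∀ a b : V, G.Reachable a b := fun a b => hconn.preconnected a b
  have hvx : v ≠ x := hx.ne
  apply le_antisymm
  · -- γ₂(G-x) ≤ γ₂(G)
    have hne : ({n | ∃ D : Set V, IsDistKDomSet G 2 D ∧ D.ncard = n}).Nonempty :=
      ⟨(Set.univ : Set V).ncard, Set.univ,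
        fun w => ⟨w, trivial, Reachable.refl w, by simp [SimpleGraph.dist_self]⟩, rfl⟩
    obtain ⟨D, hD, hcard⟩ := Nat.sInf_mem hne
    set f : V → {z | z ≠ x} := fun d => if h : d = x then ⟨v, hvx⟩ else ⟨d, h⟩ with hf
    have hdom : IsDistKDomSet (G.induce {z | z ≠ x}) 2 (f '' D) := by
      intro w
      obtain ⟨d, hdD, hdreach, hdist⟩ := hD w.1
      by_cases hdx : d = x
      · refine ⟨f d, Set.mem_image_of_mem f hdD, ?_⟩
        have hwx : w.1 ≠ x := w.2
        subst hdx
        have hle : G.dist v w.1 + 1 ≤ G.dist d w.1 := leaf_dist hx hxl hwx hdreach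
        obtain ⟨hre, hdl⟩ := induce_dist_le hx hxl hvx hwx (hreach v w.1)
        have hfd : f d = ⟨v, hvx⟩ := by simp [hf]
        rw [hfd]
        exact ⟨hre, le_trans hdl (by omega)⟩
      · refine ⟨f d, Set.mem_image_of_mem f hdD, ?_⟩
        have hfd : f d = ⟨d, hdx⟩ := by simp [hf, hdx]
        rw [hfd]
        obtain ⟨hre, hdl⟩ := induce_dist_le hx hxl hdx w.2 hdreach
        exact ⟨hre, le_trans hdl hdist⟩
    calc distDomNum (G.induce {z | z ≠ x}) 2 ≤ (f '' D).ncard :=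
          Nat.sInf_le ⟨f '' D, hdom, rfl⟩
      _ ≤ D.ncard := Set.ncard_image_le (Set.toFinite D)
      _ = distDomNum G 2 := hcard
  · -- γ₂(G) ≤ γ₂(G-x)
    have hne' : ({n | ∃ D : Set {z | z ≠ x}, IsDistKDomSet (G.induce {z | z ≠ x}) 2 D ∧
        D.ncard = n}).Nonempty :=
      ⟨(Set.univ : Set {z | z ≠ x}).ncard, Set.univ,
        fun w => ⟨w, trivial, Reachable.refl w, by simp [SimpleGraph.dist_self]⟩, rfl⟩
    obtain ⟨D', hD', hcard'⟩ := Nat.sInf_mem hne'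
    have hdom : IsDistKDomSet G 2 (Subtype.val '' D') := by
      intro w
      by_cases hw : w = x
      · subst hw
        obtain ⟨d, hdD, hre, hdle⟩ := hD' ⟨y, Ne.symm hxy⟩
        obtain ⟨hreG, hdG⟩ := dist_le_induce d.2 (Ne.symm hxy) hre
        have hdy : G.dist d.1 y ≤ 2 := le_trans hdG hdle
        refine ⟨d.1, Set.mem_image_of_mem _ hdD, hreach d.1 w, ?_⟩
        by_cases hdy' : d.1 = y
        · rw [hdy']
          have : G.dist y w ≤ (Walk.cons hy.symm (Walk.cons hx Walk.nil)).length :=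
            SimpleGraph.dist_le _
          simpa using this
        · have hle : G.dist v d.1 + 1 ≤ G.dist y d.1 :=
            leaf_dist hy hyl hdy' (hreach y d.1)
          have hc1 : G.dist y d.1 = G.dist d.1 y := SimpleGraph.dist_comm
          have hc2 : G.dist v d.1 = G.dist d.1 v := SimpleGraph.dist_comm
          have htri : G.dist d.1 w ≤ G.dist d.1 v + G.dist v w :=
            hconn.dist_triangle
          have hvw : G.dist v w ≤ (Walk.cons hx Walk.nil).length := SimpleGraph.dist_le _
          simp only [Walk.length_cons, Walk.length_nil] at hvw
          omega
      · obtain ⟨d, hdD, hre, hdle⟩ := hD' ⟨w, hw⟩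
        obtain ⟨hreG, hdG⟩ := dist_le_induce d.2 hw hre
        exact ⟨d.1, Set.mem_image_of_mem _ hdD, hreG, le_trans hdG hdle⟩
    calc distDomNum G 2 ≤ (Subtype.val '' D').ncard :=
          Nat.sInf_le ⟨Subtype.val '' D', hdom, rfl⟩
      _ ≤ D'.ncard := Set.ncard_image_le (Set.toFinite D')
      _ = distDomNum (G.induce {z | z ≠ x}) 2 := hcard'


end EternalDom
end
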